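/- Under model Y = h0(X) + (α0 + X_Jᵀβ_{0,J} + X_{J^C}ᵀβ_{0,J^C})A + ε, with U = {U_k : k ∈ J^C} the weighted projections residuals U_k = X_k - X̃_Jᵀγ_k and Γ the matrix with columns γ_k, the model can be rewritten as Y = h'0(X) + (α'0 + Uᵀβ_{0,J^C})A + ε', where h'0(X) = h0(X) + q0(X)[X̃_J - E(W^2 X̃_J)/E(W^2)]ᵀλ, α'0 = E(W^2 X̃_Jᵀ)λ/E(W^2), ε' = ε + W[X̃_J - E(W^2 X̃_J)/E(W^2)]ᵀλ, and λ = (α0, β_{0,J}ᵀ)ᵀ + Γ β_{0,J^C}. -/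
import Mathlib


open MeasureTheory ProbabilityTheory Filter

/-- Under the model `Y = h0(X) + (α0 + X_Jᵀβ_{0,J} + X_{Jᶜ}ᵀβ_{0,Jᶜ})A + ε`, with
`Uk = Xk - X̃_Jᵀγk` the weighted projection residuals and `Γ` the matrix with columns `γk`,
the model can be rewritten as `Y = h'0(X) + (α'0 + Uᵀβ_{0,Jᶜ})A + ε'` where
`h'0(X) = h0(X) + q0(X)[X̃_J - E(W²X̃_J)/E(W²)]ᵀλ`, `α'0 = E(W²X̃_Jᵀ)λ/E(W²)`,
`ε' = ε + W[X̃_J - E(W²X̃_J)/E(W²)]ᵀλ`, and `λ = (α0, β_{0,J}ᵀ)ᵀ + Γ β_{0,Jᶜ}`. -/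
theorem statement8 {Ω : Type*} [MeasurableSpace Ω] (μ : Measure Ω) [IsProbabilityMeasure μ]
    {p d r : ℕ} (X : Ω → (Fin p → ℝ)) (A Y ε : Ω → ℝ)
    (h0 q0 : (Fin p → ℝ) → ℝ) (α0 : ℝ)
    (J : Fin d → Fin p) (Jc : Fin r → Fin p) (βJ : Fin d → ℝ) (βC : Fin r → ℝ)
    (hA01 : ∀ ω, A ω = 0 ∨ A ω = 1)
    (W : Ω → ℝ) (hWdef : ∀ ω, W ω = A ω - q0 (X ω))
    (hEW2 : 0 < ∫ ω, (W ω) ^ 2 ∂μ)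
    (Xt : Ω → Fin (d + 1) → ℝ)
    (hXt : ∀ ω, Xt ω = Fin.cons 1 (fun j => X ω (J j)))
    -- weighted projection coefficients γ_k and residuals U_k
    (γ : Fin r → Fin (d + 1) → ℝ)
    (hγ : ∀ (k : Fin r) (γ' : Fin (d + 1) → ℝ),
      ∫ ω, (W ω * (X ω (Jc k) - ∑ i, Xt ω i * γ k i)) ^ 2 ∂μ ≤
        ∫ ω, (W ω * (X ω (Jc k) - ∑ i, Xt ω i * γ' i)) ^ 2 ∂μ)
    (U : Fin r → Ω → ℝ)
    (hU : ∀ k ω, U k ω = X ω (Jc k) - ∑ i, Xt ω i * γ k i)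
    (lam : Fin (d + 1) → ℝ)
    (hlam : ∀ i, lam i = (Fin.cons α0 βJ : Fin (d + 1) → ℝ) i + ∑ k, γ k i * βC k)
    (e : Fin (d + 1) → ℝ)
    (he : ∀ i, e i = (∫ ω, (W ω) ^ 2 * Xt ω i ∂μ) / ∫ ω, (W ω) ^ 2 ∂μ)
    (hmodel : ∀ᵐ ω ∂μ, Y ω =
      h0 (X ω) + (α0 + (∑ j, X ω (J j) * βJ j) + ∑ k, X ω (Jc k) * βC k) * A ω + ε ω) :
    ∀ᵐ ω ∂μ, Y ω =
      (h0 (X ω) + q0 (X ω) * ∑ i, (Xt ω i - e i) * lam i)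
        + ((∑ i, e i * lam i) + ∑ k, U k ω * βC k) * A ω
        + (ε ω + W ω * ∑ i, (Xt ω i - e i) * lam i) := by
  filter_upwards [hmodel] with ω hω
  have hA : A ω = W ω + q0 (X ω) := by rw [hWdef]; ring
  have hsub : ∑ i, (Xt ω i - e i) * lam i
      = (∑ i, Xt ω i * lam i) - ∑ i, e i * lam i := by
    rw [← Finset.sum_sub_distrib]
    exact Finset.sum_congr rfl fun i _ => by ring
  have h1 : ∑ i, Xt ω i * lam i
      = (α0 + ∑ j, X ω (J j) * βJ j)
        + ∑ k, (∑ i, Xt ω i * γ k i) * βC k := by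
    have : ∀ i, Xt ω i * lam i
        = Xt ω i * (Fin.cons α0 βJ : Fin (d+1) → ℝ) i
          + ∑ k, Xt ω i * γ k i * βC k := by
      intro i
      rw [hlam, mul_add, Finset.mul_sum]
      congr 1
      exact Finset.sum_congr rfl fun k _ => by ring
    rw [Finset.sum_congr rfl fun i _ => this i, Finset.sum_add_distrib]
    congr 1
    · rw [Fin.sum_univ_succ]
      simp [hXt]
    · rw [Finset.sum_comm]
      exact Finset.sum_congr rfl fun k _ => by rw [Finset.sum_mul]
  have h2 : ∑ k, U k ω * βC k
      = (∑ k, X ω (Jc k) * βC k) - ∑ k, (∑ i, Xt ω i * γ k i) * βC k := by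
    rw [← Finset.sum_sub_distrib]
    exact Finset.sum_congr rfl fun k _ => by rw [hU]; ring
  rw [hω, hsub, h2, hA]
  linear_combination (-(W ω + q0 (X ω))) * h1
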